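/- Let V, η, ξ, φ, h, κ, μ be with φ² = −id + ξ·η, hξ=0, η∘h=0, hφ=−φh, h²=(κ−1)φ², κ<1, (1−μ/2)² < 1−κ. Set h̃ := (1/(2√(1−κ)))((2−μ)φh + 2(1−κ)φ) and φ₁ := h̃/√(1−κ−(1−μ/2)²). Then φ₁² = −id + ξ·η. -/

import Mathlib

theorem stmt_13 {V : Type*} [AddCommGroup V] [Module ℝ V]
    (η : V →ₗ[ℝ] ℝ) (ξ : V) (hξ : η ξ = 1)
    (φ h : Module.End ℝ V) (κ μ : ℝ) (hκ : κ < 1)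
    (hμ : (1 - μ / 2) ^ 2 < 1 - κ)
    (hφ2 : φ ^ 2 = -1 + η.smulRight ξ)
    (hhξ : h ξ = 0) (hηh : ∀ v, η (h v) = 0)
    (hanti : h * φ = -(φ * h))
    (hh2 : h ^ 2 = (κ - 1) • φ ^ 2) :
    let ht : Module.End ℝ V :=
      (1 / (2 * Real.sqrt (1 - κ))) • ((2 - μ) • (φ * h) + (2 * (1 - κ)) • φ)
    ((1 / Real.sqrt (1 - κ - (1 - μ / 2) ^ 2)) • ht) ^ 2 = -1 + η.smulRight ξ := by
  intro ht
  set E := η.smulRight ξ with hE_def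
  have hb : (0:ℝ) < 1 - κ := by linarith
  have hd : (0:ℝ) < 1 - κ - (1 - μ / 2) ^ 2 := by linarith
  have hsb : Real.sqrt (1 - κ) ^ 2 = 1 - κ := Real.sq_sqrt hb.le
  have hsd : Real.sqrt (1 - κ - (1 - μ / 2) ^ 2) ^ 2 = 1 - κ - (1 - μ / 2) ^ 2 :=
    Real.sq_sqrt hd.le
  have hsbpos : 0 < Real.sqrt (1 - κ) := Real.sqrt_pos.mpr hb
  have hsdpos : 0 < Real.sqrt (1 - κ - (1 - μ / 2) ^ 2) := Real.sqrt_pos.mpr hd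
  have hEE : E * E = E := by
    ext v
    simp [hE_def, Module.End.mul_apply, hξ]
  have hφ4 : φ ^ 2 * φ ^ 2 = -(φ ^ 2) := by
    have h1 : (-1 + E) * (-1 + E) = 1 - E - E + E * E := by noncomm_ring
    rw [hφ2, h1, hEE]
    abel
  have h1 : (φ * h) * (φ * h) = (1 - κ) • (φ ^ 2 * φ ^ 2) := by
    have : (φ * h) * (φ * h) = φ * (h * φ) * h := by noncomm_ring
    rw [this, hanti]
    have : φ * -(φ * h) * h = -(φ ^ 2 * h ^ 2) := by noncomm_ring
    rw [this, hh2, mul_smul_comm, ← neg_smul]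
    congr 1; ring
  have h2 : (φ * h) * φ = -(φ * (φ * h)) := by
    have : (φ * h) * φ = φ * (h * φ) := by noncomm_ring
    rw [this, hanti]; noncomm_ring
  have hAA : ((2 - μ) • (φ * h) + (2 * (1 - κ)) • φ) *
      ((2 - μ) • (φ * h) + (2 * (1 - κ)) • φ)
      = ((2 - μ) ^ 2 * (1 - κ) - (2 * (1 - κ)) ^ 2) • (-(φ ^ 2)) := by
    rw [mul_add, add_mul, add_mul, smul_mul_assoc, smul_mul_assoc, smul_mul_assoc,
      smul_mul_assoc, mul_smul_comm, mul_smul_comm, mul_smul_comm, mul_smul_comm,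
      h1, h2, hφ4]
    have hφφ : φ * φ = φ ^ 2 := by rw [sq]
    rw [hφφ]
    match_scalars <;> ring
  have hAA2 : ((2 - μ) • (φ * h) + (2 * (1 - κ)) • φ) ^ 2
      = ((2 - μ) ^ 2 * (1 - κ) - (2 * (1 - κ)) ^ 2) • (-(φ ^ 2)) := by
    rw [sq, hAA]
  show ((1 / Real.sqrt (1 - κ - (1 - μ / 2) ^ 2)) • ht) ^ 2 = -1 + E
  simp only [ht]
  rw [smul_pow, smul_pow, hAA2, smul_smul, smul_smul, ← hφ2]
  have hsc : (1 / Real.sqrt (1 - κ - (1 - μ / 2) ^ 2)) ^ 2 *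
      ((1 / (2 * Real.sqrt (1 - κ))) ^ 2 *
        ((2 - μ) ^ 2 * (1 - κ) - (2 * (1 - κ)) ^ 2)) = -1 := by
    have h4 : (2 * Real.sqrt (1 - κ)) ^ 2 = 4 * (1 - κ) := by
      rw [mul_pow, hsb]; ring
    have hne1 : (1 - κ - (1 - μ / 2) ^ 2) ≠ 0 := ne_of_gt hd
    have hne2 : (4 : ℝ) * (1 - κ) ≠ 0 := by positivity
    rw [div_pow, div_pow, one_pow, hsd, h4]
    rw [show (2 - μ) ^ 2 * (1 - κ) - (2 * (1 - κ)) ^ 2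
        = -((1 - κ - (1 - μ / 2) ^ 2) * (4 * (1 - κ))) from by ring]
    field_simp
    rw [neg_inj, div_eq_iff (ne_of_gt (by nlinarith))]
    ring
  rw [mul_assoc, hsc]
  module
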